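/- If F has density a ω^{−2} exp(−a²/(4ω²)) / (2√π) on ℝ \ {0} (a > 0), then ∫_ℝ exp(−d ω²/2) dF(ω) = exp(−a √(d/2)) for all d ≥ 0. -/

import Mathlib

set_option maxHeartbeats 1000000

open MeasureTheory Real Set

private lemma image_div_Ioi (c : ℝ) (hc : 0 < c) :
    (fun u : ℝ => c / u) '' Ioi 0 = Ioi 0 := by
  ext y
  constructor
  · rintro ⟨u, hu, rfl⟩
    exact div_pos hc hu
  · intro hy
    exact ⟨c / y, div_pos hc hy, by field_simp⟩

private lemma injOn_div' (c : ℝ) (hc : 0 < c) :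
    Set.InjOn (fun u : ℝ => c / u) (Ioi 0) := by
  intro u hu v hv h
  dsimp only at h
  have hu0 : u ≠ 0 := ne_of_gt hu
  have hv0 : v ≠ 0 := ne_of_gt hv
  field_simp at h
  exact h.symm

private lemma myDerivDiv (c : ℝ) {u : ℝ} (hu : u ≠ 0) :
    HasDerivAt (fun x : ℝ => c / x) (-(c / u ^ 2)) u := by
  have h := (hasDerivAt_inv hu).const_mul c
  simpa [div_eq_mul_inv, mul_neg] using h

private lemma image_theta (b : ℝ) (hb : 0 < b) :
    (fun u : ℝ => u - b / u) '' Ioi 0 = univ := by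
  apply eq_univ_of_forall
  intro t
  set s := Real.sqrt (t ^ 2 + 4 * b) with hs
  have hs2 : s ^ 2 = t ^ 2 + 4 * b := Real.sq_sqrt (by positivity)
  have hs0 : 0 ≤ s := Real.sqrt_nonneg _
  have hst : -t < s := by nlinarith [sq_nonneg (s + t), sq_nonneg (s - t)]
  have hu : 0 < (t + s) / 2 := by linarith
  refine ⟨(t + s) / 2, hu, ?_⟩
  have hne2 : t + s ≠ 0 := by intro h0; rw [show s = -t by linarith] at hst; linarith
  field_simp
  linear_combination hs2

private lemma injOn_theta (b : ℝ) (hb : 0 < b) :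
    Set.InjOn (fun u : ℝ => u - b / u) (Ioi 0) := by
  intro u hu v hv h
  dsimp only at h
  have hu0 : (0:ℝ) < u := hu
  have hv0 : (0:ℝ) < v := hv
  have hu0' : u ≠ 0 := ne_of_gt hu0
  have hv0' : v ≠ 0 := ne_of_gt hv0
  field_simp at h
  have key : (u - v) * (u * v + b) = 0 := by linear_combination h
  rcases mul_eq_zero.mp key with h1 | h2
  · linarith
  · nlinarith

private lemma theta_deriv (b : ℝ) {u : ℝ} (hu : u ≠ 0) :
    HasDerivAt (fun x : ℝ => x - b / x) (1 + b / u ^ 2) u := by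
  have h := (hasDerivAt_id' u).sub ((hasDerivAt_inv hu).const_mul b)
  simpa [div_eq_mul_inv, mul_neg, sub_neg_eq_add, Pi.sub_def] using h

private lemma glasser (b : ℝ) (hb : 0 ≤ b) :
    ∫ u in Ioi (0:ℝ), Real.exp (-u ^ 2 - b ^ 2 / u ^ 2)
      = Real.sqrt π / 2 * Real.exp (-(2 * b)) := by
  rcases eq_or_lt_of_le hb with rfl | hb
  · have h := integral_gaussian_Ioi 1
    norm_num at h ⊢
    simpa using h
  · set E : ℝ → ℝ := fun u => Real.exp (-(u - b / u) ^ 2) with hE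
    have hθd : ∀ u ∈ Ioi (0:ℝ),
        HasDerivWithinAt (fun x : ℝ => x - b / x) (1 + b / u ^ 2) (Ioi 0) u :=
      fun u hu => (theta_deriv b (ne_of_gt hu)).hasDerivWithinAt
    have hsub1 := integral_image_eq_integral_abs_deriv_smul measurableSet_Ioi hθd
      (injOn_theta b hb) (fun t => Real.exp (-t ^ 2))
    rw [image_theta b hb, setIntegral_univ] at hsub1
    have hgauss : (∫ t : ℝ, Real.exp (-t ^ 2)) = Real.sqrt π := by
      simpa using integral_gaussian 1
    have habs : ∀ u ∈ Ioi (0:ℝ),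
        |1 + b / u ^ 2| • Real.exp (-(u - b / u) ^ 2) = (1 + b / u ^ 2) * E u := by
      intro u hu
      have hu0 : (0:ℝ) < u := hu
      rw [smul_eq_mul, abs_of_pos (by positivity)]
    have hS : (∫ u in Ioi (0:ℝ), (1 + b / u ^ 2) * E u) = Real.sqrt π := by
      rw [← setIntegral_congr_fun measurableSet_Ioi habs, ← hsub1, hgauss]
    have hgint : Integrable (fun u : ℝ => Real.exp (-u ^ 2)) := by
      simpa using integrable_exp_neg_mul_sq (one_pos)
    have hS_int : IntegrableOn (fun u : ℝ => (1 + b / u ^ 2) * E u) (Ioi 0) := by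
      have h := (integrableOn_image_iff_integrableOn_abs_deriv_smul measurableSet_Ioi hθd
        (injOn_theta b hb) (fun t => Real.exp (-t ^ 2))).mp ?_
      · exact h.congr_fun habs measurableSet_Ioi
      · rw [image_theta b hb, integrableOn_univ]
        exact hgint
    have hE_cont : ContinuousOn E (Ioi 0) := by
      apply Real.continuous_exp.comp_continuousOn
      exact (((continuousOn_id.sub (continuousOn_const.div continuousOn_id
        fun u hu => (ne_of_gt (mem_Ioi.mp hu)))).pow 2).neg)
    have hE_int : IntegrableOn E (Ioi 0) := by
      have hg : Integrable (fun u : ℝ => Real.exp (2 * b) * Real.exp (-u ^ 2)) :=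
        hgint.const_mul _
      refine (hg.integrableOn).mono' (hE_cont.aestronglyMeasurable measurableSet_Ioi) ?_
      filter_upwards [ae_restrict_mem measurableSet_Ioi] with u hu
      have hu0 : (0:ℝ) < u := hu
      have h1 : E u = Real.exp (2 * b) * Real.exp (-u ^ 2 - b ^ 2 / u ^ 2) := by
        simp only [hE, ← Real.exp_add]
        congr 1
        field_simp
        ring
      have hEpos : (0:ℝ) < E u := by simp only [hE]; positivity
      rw [Real.norm_eq_abs, abs_of_pos hEpos, h1]
      have h2 : Real.exp (-u ^ 2 - b ^ 2 / u ^ 2) ≤ Real.exp (-u ^ 2) := by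
        apply Real.exp_le_exp.mpr
        have : 0 ≤ b ^ 2 / u ^ 2 := by positivity
        linarith
      nlinarith [Real.exp_pos (2 * b)]
    have hψd : ∀ u ∈ Ioi (0:ℝ),
        HasDerivWithinAt (fun x : ℝ => b / x) (-(b / u ^ 2)) (Ioi 0) u :=
      fun u hu => (myDerivDiv b (ne_of_gt hu)).hasDerivWithinAt
    have hψ := integral_image_eq_integral_abs_deriv_smul measurableSet_Ioi hψd
      (injOn_div' b hb) E
    rw [image_div_Ioi b hb] at hψ
    have hψ' : (∫ u in Ioi (0:ℝ), E u) = ∫ u in Ioi (0:ℝ), (b / u ^ 2) * E u := by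
      rw [hψ]
      refine setIntegral_congr_fun measurableSet_Ioi fun u hu => ?_
      have hu0 : (0:ℝ) < u := hu
      have hbu : b / (b / u) = u := by field_simp
      rw [smul_eq_mul, abs_neg, abs_of_pos (by positivity)]
      congr 1
      simp only [hE]
      rw [hbu]
      congr 1
      ring
    have hT_int : IntegrableOn (fun u : ℝ => (b / u ^ 2) * E u) (Ioi 0) := by
      refine IntegrableOn.congr_fun (hS_int.sub hE_int) (fun u hu => ?_) measurableSet_Ioi
      simp only [Pi.sub_apply]
      ring
    have hsplit : (∫ u in Ioi (0:ℝ), (1 + b / u ^ 2) * E u)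
        = (∫ u in Ioi (0:ℝ), E u) + ∫ u in Ioi (0:ℝ), (b / u ^ 2) * E u := by
      rw [← integral_add hE_int hT_int]
      congr 1
      funext u
      ring
    have hJ : (∫ u in Ioi (0:ℝ), E u) = Real.sqrt π / 2 := by
      rw [hsplit, ← hψ'] at hS
      linarith
    have hpt : ∀ u ∈ Ioi (0:ℝ),
        Real.exp (-u ^ 2 - b ^ 2 / u ^ 2) = Real.exp (-(2 * b)) * E u := by
      intro u hu
      have hu0 : (0:ℝ) < u := hu
      simp only [hE, ← Real.exp_add]
      congr 1
      field_simp
      ring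
    rw [setIntegral_congr_fun measurableSet_Ioi hpt, integral_const_mul, hJ]
    ring

/-- Entry 8 of Table 1: the spectral density `a ω^{−2} exp(−a²/(4ω²))/(2√π)` yields the
stable correlation `C(d) = exp(−a√(d/2))`. -/
theorem stable_spectral_measure
    (a : ℝ) (ha : 0 < a) (d : ℝ) (hd : 0 ≤ d) :
    ∫ ω : ℝ, Real.exp (-d * ω ^ 2 / 2)
        * (a * (ω ^ 2)⁻¹ * Real.exp (-a ^ 2 / (4 * ω ^ 2)) / (2 * Real.sqrt Real.pi))
      = Real.exp (-a * Real.sqrt (d / 2)) := by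
  set F : ℝ → ℝ := fun ω => Real.exp (-d * ω ^ 2 / 2)
      * (a * (ω ^ 2)⁻¹ * Real.exp (-a ^ 2 / (4 * ω ^ 2)) / (2 * Real.sqrt Real.pi)) with hF
  set b : ℝ := a * Real.sqrt (d / 2) / 2 with hbdef
  have hb : 0 ≤ b := by positivity
  have hb2 : b ^ 2 = a ^ 2 * d / 8 := by
    rw [hbdef, div_pow, mul_pow, Real.sq_sqrt (by linarith : (0:ℝ) ≤ d / 2)]
    ring
  have heven : (∫ ω : ℝ, F ω) = 2 * ∫ ω in Ioi (0:ℝ), F ω := by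
    rw [show (∫ ω : ℝ, F ω) = ∫ ω : ℝ, F |ω| by
      congr 1; funext ω; simp only [hF, sq_abs]]
    exact integral_comp_abs
  have hφd : ∀ u ∈ Ioi (0:ℝ),
      HasDerivWithinAt (fun x : ℝ => a / 2 / x) (-(a / 2 / u ^ 2)) (Ioi 0) u :=
    fun u hu => (myDerivDiv (a / 2) (ne_of_gt hu)).hasDerivWithinAt
  have hφ := integral_image_eq_integral_abs_deriv_smul measurableSet_Ioi hφd
    (injOn_div' (a / 2) (by positivity)) F
  rw [image_div_Ioi (a / 2) (by positivity)] at hφ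
  have hpt : ∀ u ∈ Ioi (0:ℝ),
      |-(a / 2 / u ^ 2)| • F (a / 2 / u)
        = (Real.sqrt π)⁻¹ * Real.exp (-u ^ 2 - b ^ 2 / u ^ 2) := by
    intro u hu
    have hu0 : (0:ℝ) < u := hu
    have e1 : -a ^ 2 / (4 * (a / 2 / u) ^ 2) = -u ^ 2 := by
      field_simp
      ring
    have e2 : -d * (a / 2 / u) ^ 2 / 2 = -(b ^ 2 / u ^ 2) := by
      rw [hb2]; field_simp; ring
    rw [smul_eq_mul, abs_neg, abs_of_pos (by positivity), hF]
    dsimp only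
    rw [e1, e2, show -u ^ 2 - b ^ 2 / u ^ 2 = -(b ^ 2 / u ^ 2) + -u ^ 2 by ring,
      Real.exp_add]
    have hsp : Real.sqrt π ≠ 0 := (Real.sqrt_pos.mpr Real.pi_pos).ne'
    field_simp
  rw [heven, hφ, setIntegral_congr_fun measurableSet_Ioi hpt, integral_const_mul,
    glasser b hb]
  rw [show (-(2 * b)) = -a * Real.sqrt (d / 2) by rw [hbdef]; ring]
  have hsp : Real.sqrt π ≠ 0 := (Real.sqrt_pos.mpr Real.pi_pos).ne'
  field_simp
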